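/- For every prime number p, the quaternion algebra over the p-adic field ℚ_[p] with basis 1, x, y, xy satisfying x² = −3, y² = 5, yx = −xy (i.e., Mathlib's QuaternionAlgebra ℚ_[p] (−3) 5) is isomorphic as a ℚ_[p]-algebra to the algebra of 2×2 matrices over ℚ_[p] if and only if p ≠ 3 and p ≠ 5. -/

import Mathlib

open Quaternion

def quatBasis {K : Type*} [Field K] (x y : K) (h : x^2 + 3*y^2 = 5) :
    QuaternionAlgebra.Basis (Matrix (Fin 2) (Fin 2) K) (-3 : K) 0 (5 : K) where
  i := !![0, -3; 1, 0]
  j := !![x, 3*y; y, -x]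
  k := !![-3*y, 3*x; x, 3*y]
  i_mul_i := by
    ext i j; fin_cases i <;> fin_cases j <;>
      simp [Matrix.mul_apply, Fin.sum_univ_succ, Matrix.smul_apply, Matrix.one_apply]
  j_mul_j := by
    rw [show (5:K) = x^2 + 3*y^2 from h.symm]
    ext i j; fin_cases i <;> fin_cases j <;>
      simp [Matrix.mul_apply, Fin.sum_univ_succ, Matrix.smul_apply, Matrix.one_apply] <;> ring
  i_mul_j := by
    ext i j; fin_cases i <;> fin_cases j <;>
      simp [Matrix.mul_apply, Fin.sum_univ_succ] <;> ring
  j_mul_i := by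
    ext i j; fin_cases i <;> fin_cases j <;>
      simp [Matrix.mul_apply, Fin.sum_univ_succ] <;> ring

theorem split_of_rep {K : Type*} [Field K] [CharZero K] {x y : K} (h : x^2 + 3*y^2 = 5) :
    Nonempty (ℍ[K, -3, 5] ≃ₐ[K] Matrix (Fin 2) (Fin 2) K) := by
  let φ := (quatBasis x y h).liftHom
  have hsurj : Function.Surjective φ := by
    intro m
    refine ⟨⟨(m 0 0 + m 1 1)/2, (m 1 0 - m 0 1/3)/2,
      (x*((m 0 0 - m 1 1)/2) + 3*y*((m 1 0 + m 0 1/3)/2))/5,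
      (x*((m 1 0 + m 0 1/3)/2) - y*((m 0 0 - m 1 1)/2))/5⟩, ?_⟩
    show (quatBasis x y h).lift _ = m
    ext i j
    fin_cases i <;> fin_cases j <;>
      simp [QuaternionAlgebra.Basis.lift, quatBasis, Matrix.algebraMap_matrix_apply] <;>
      field_simp
    · linear_combination ((m 0 0 - m 1 1))*h
    · linear_combination (3*(m 1 0) + (m 0 1))*h
    · linear_combination (3*(m 1 0) + (m 0 1))*h
    · linear_combination (-(m 0 0 - m 1 1))*h
  have hdim : Module.finrank K ℍ[K,-3,5] = Module.finrank K (Matrix (Fin 2) (Fin 2) K) := by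
    simp [QuaternionAlgebra.finrank_eq_four, Module.finrank_matrix]
  have hinj : Function.Injective φ :=
    (LinearMap.injective_iff_surjective_of_finrank_eq_finrank hdim (f := φ.toLinearMap)).mpr hsurj
  exact ⟨AlgEquiv.ofBijective φ ⟨hinj, hsurj⟩⟩


theorem toZMod_eq_zero_iff_dvd {p : ℕ} [Fact p.Prime] (x : ℤ_[p]) :
    PadicInt.toZMod x = 0 ↔ (p : ℤ_[p]) ∣ x := by
  rw [← RingHom.mem_ker, PadicInt.ker_toZMod, PadicInt.maximalIdeal_eq_span_p,
    Ideal.mem_span_singleton]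

theorem padic_sqrt {p : ℕ} [Fact p.Prime] (c α : ℤ_[p])
    (hcond : ‖α^2 - c‖ < ‖2*α‖^2) : ∃ z : ℤ_[p], z^2 = c := by
  have hcond' : ‖(Polynomial.X^2 - Polynomial.C c).eval α‖ <
      ‖(Polynomial.X^2 - Polynomial.C c).derivative.eval α‖^2 := by
    have heval : (Polynomial.X^2 - Polynomial.C c).eval α = α^2 - c := by simp
    have hderiv : (Polynomial.X^2 - Polynomial.C c).derivative.eval α = 2*α := by
      simp [Polynomial.derivative_sub]; norm_num
    rw [heval, hderiv]; exact hcond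
  obtain ⟨z, hz, -⟩ := hensels_lemma hcond'
  exact ⟨z, by simpa [sub_eq_zero] using hz⟩

theorem sqrt_of_residue {p : ℕ} [Fact p.Prime] (hp2 : p ≠ 2) (c α : ℤ_[p])
    (hα : PadicInt.toZMod α ≠ 0) (h : PadicInt.toZMod (α^2 - c) = 0) :
    ∃ z : ℤ_[p], z^2 = c := by
  have hdvd : (p : ℤ_[p]) ∣ α^2 - c := (toZMod_eq_zero_iff_dvd _).mp h
  have hnorm1 : ‖α^2 - c‖ < 1 := (PadicInt.norm_lt_one_iff_dvd _).mpr hdvd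
  have h2 : PadicInt.toZMod (2 * α) ≠ 0 := by
    rw [map_mul]
    refine mul_ne_zero ?_ hα
    intro hz
    rw [toZMod_eq_zero_iff_dvd] at hz
    have h1 : ‖((2:ℤ) : ℤ_[p])‖ < 1 := by
      push_cast
      exact (PadicInt.norm_lt_one_iff_dvd _).mpr hz
    rw [PadicInt.norm_int_lt_one_iff_dvd] at h1
    have : p ∣ 2 := Int.ofNat_dvd.mp (by exact_mod_cast h1)
    exact hp2 ((Nat.prime_dvd_prime_iff_eq Fact.out Nat.prime_two).mp this)
  have hder : ‖(2 : ℤ_[p]) * α‖ = 1 := by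
    rcases lt_or_eq_of_le (PadicInt.norm_le_one (2 * α)) with hlt | heq
    · exfalso; exact h2 ((toZMod_eq_zero_iff_dvd _).mpr ((PadicInt.norm_lt_one_iff_dvd _).mp hlt))
    · exact heq
  apply padic_sqrt c α
  rw [hder]; simpa using hnorm1

theorem zmod_rep (p : ℕ) [hp : Fact p.Prime] (hp2 : p ≠ 2) (hp3 : p ≠ 3) :
    ∃ a b : ZMod p, a^2 + 3*b^2 = 5 := by
  have hp_odd : p % 2 = 1 := (Nat.Prime.eq_two_or_odd hp.1).resolve_left hp2
  have h3 : (3 : ZMod p) ≠ 0 := by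
    intro h
    have : (p : ℕ) ∣ 3 := (ZMod.natCast_eq_zero_iff 3 p).mp (by exact_mod_cast h)
    exact hp3 ((Nat.prime_dvd_prime_iff_eq hp.1 Nat.prime_three).mp this)
  classical
  let f : Polynomial (ZMod p) := Polynomial.X ^ 2 - Polynomial.C 5
  let g : Polynomial (ZMod p) := Polynomial.C 3 * Polynomial.X ^ 2
  obtain ⟨a, b, hab⟩ : ∃ a b, f.eval a + g.eval b = 0 :=
    FiniteField.exists_root_sum_quadratic (f := f) (g := g)
      (Polynomial.degree_X_pow_sub_C (by norm_num) _)
      (Polynomial.degree_C_mul_X_pow 2 h3)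
      (by rw [ZMod.card]; exact hp_odd)
  refine ⟨a, b, ?_⟩
  simp only [f, g, Polynomial.eval_add, Polynomial.eval_sub, Polynomial.eval_pow,
    Polynomial.eval_X, Polynomial.eval_C, Polynomial.eval_mul] at hab
  linear_combination hab

theorem exists_rep (p : ℕ) [hp : Fact p.Prime] (hp3 : p ≠ 3) (hp5 : p ≠ 5) :
    ∃ x y : ℚ_[p], x^2 + 3*y^2 = 5 := by
  by_cases hp2 : p = 2
  · subst hp2
    -- x² = -7, y = 2
    obtain ⟨z, hz⟩ := padic_sqrt (p := 2) (-7) 1 (by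
      have h8 : (1:ℤ_[2])^2 - (-7) = 2^3 := by norm_num
      have h2n : ‖(2 : ℤ_[2])‖ = 2⁻¹ := by
        have := PadicInt.norm_p (p := 2); exact_mod_cast this
      rw [h8, show ((2:ℤ_[2])*1) = 2 by ring, norm_pow, h2n]
      norm_num)
    refine ⟨(z : ℚ_[2]), 2, ?_⟩
    have : (z:ℚ_[2])^2 = -7 := by exact_mod_cast congrArg _ hz
    rw [this]; norm_num
  · obtain ⟨a, b, hab⟩ := zmod_rep p hp2 hp3
    have h3 : (3 : ZMod p) ≠ 0 := by
      intro h
      have : (p : ℕ) ∣ 3 := (ZMod.natCast_eq_zero_iff 3 p).mp (by exact_mod_cast h)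
      exact hp3 ((Nat.prime_dvd_prime_iff_eq hp.1 Nat.prime_three).mp this)
    by_cases ha : a = 0
    · -- then 3b² = 5, b ≠ 0 ; solve w² = 15, x = 0, y = w/3
      have hb : b ≠ 0 := by
        intro hb
        rw [ha, hb] at hab
        simp at hab
        have : (p:ℕ) ∣ 5 := (ZMod.natCast_eq_zero_iff 5 p).mp (by exact_mod_cast hab.symm)
        exact hp5 ((Nat.prime_dvd_prime_iff_eq hp.1 (by norm_num)).mp this)
      set α : ℤ_[p] := 3 * (b.val : ℤ_[p]) with hα
      have hres : PadicInt.toZMod α = 3 * b := by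
        rw [hα, map_mul, map_natCast, map_ofNat]
        norm_cast
        simp [ZMod.natCast_val, ZMod.cast_id]
      obtain ⟨w, hw⟩ := sqrt_of_residue hp2 15 α
        (by rw [hres]; exact mul_ne_zero h3 hb)
        (by
          rw [map_sub, map_pow, hres]
          have : ((15:ℤ_[p])) = ((15:ℕ):ℤ_[p]) := by norm_num
          rw [this, map_natCast]
          push_cast
          rw [ha] at hab
          linear_combination 3 * hab)
      refine ⟨0, (w : ℚ_[p])/3, ?_⟩
      have hw' : (w:ℚ_[p])^2 = 15 := by exact_mod_cast congrArg _ hw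
      field_simp
      linear_combination hw'
    · set α : ℤ_[p] := (a.val : ℤ_[p]) with hα
      set β : ℤ_[p] := (b.val : ℤ_[p]) with hβ
      have hresa : PadicInt.toZMod α = a := by
        rw [hα, map_natCast]; simp [ZMod.natCast_val, ZMod.cast_id]
      have hresb : PadicInt.toZMod β = b := by
        rw [hβ, map_natCast]; simp [ZMod.natCast_val, ZMod.cast_id]
      obtain ⟨z, hz⟩ := sqrt_of_residue hp2 (5 - 3*β^2) α (by rw [hresa]; exact ha)
        (by
          rw [map_sub, map_pow, hresa, map_sub, map_mul, map_pow, hresb]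
          have : ((5:ℤ_[p])) = ((5:ℕ):ℤ_[p]) := by norm_num
          rw [this, map_natCast]
          have h3' : ((3:ℤ_[p])) = ((3:ℕ):ℤ_[p]) := by norm_num
          rw [h3', map_natCast]
          push_cast
          linear_combination hab)
      refine ⟨(z : ℚ_[p]), (β : ℚ_[p]), ?_⟩
      have : (z:ℚ_[p])^2 = 5 - 3*(β:ℚ_[p])^2 := by exact_mod_cast congrArg _ hz
      linear_combination this

theorem toZMod_eq_zero_iff_dvd' {p : ℕ} [Fact p.Prime] (x : ℤ_[p]) :
    PadicInt.toZMod x = 0 ↔ (p : ℤ_[p]) ∣ x := by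
  rw [← RingHom.mem_ker, PadicInt.ker_toZMod, PadicInt.maximalIdeal_eq_span_p,
    Ideal.mem_span_singleton]

theorem step3 (s t u : ℤ_[3]) (h : -3*s^2 + 5*t^2 + 15*u^2 = 0) :
    ∃ s' t' u' : ℤ_[3], s = 3*s' ∧ t = 3*t' ∧ u = 3*u' ∧
      -3*s'^2 + 5*t'^2 + 15*u'^2 = 0 := by
  have h3ne : (3 : ℤ_[3]) ≠ 0 := by
    have : ((3:ℕ) : ℤ_[3]) ≠ 0 := Nat.cast_ne_zero.mpr (by norm_num)
    exact_mod_cast this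
  have hcast : ((3:ℕ) : ℤ_[3]) = (3 : ℤ_[3]) := by norm_num
  have ht : PadicInt.toZMod t = 0 := by
    have := congrArg PadicInt.toZMod h
    simp only [map_add, map_mul, map_neg, map_pow, map_ofNat, map_zero] at this
    have h2 : ∀ x y z : ZMod 3, -3*x^2 + 5*y^2 + 15*z^2 = 2*y^2 := by decide
    rw [h2] at this
    have : ∀ y : ZMod 3, 2*y^2 = 0 → y = 0 := by decide
    exact this _ (by assumption)
  obtain ⟨t', ht'⟩ := (toZMod_eq_zero_iff_dvd' t).mp ht
  rw [hcast] at ht'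
  have h2 : -s^2 + 15*t'^2 + 5*u^2 = 0 := by
    have : 3 * (-s^2 + 15*t'^2 + 5*u^2) = 3 * 0 := by rw [mul_zero]; linear_combination h - (5*t + 15*t')*ht'
    exact mul_left_cancel₀ h3ne this
  have hsu : PadicInt.toZMod s = 0 ∧ PadicInt.toZMod u = 0 := by
    have := congrArg PadicInt.toZMod h2
    simp only [map_add, map_mul, map_neg, map_pow, map_ofNat, map_zero] at this
    have key : ∀ x y z : ZMod 3, -x^2 + 15*y^2 + 5*z^2 = 0 → x = 0 ∧ z = 0 := by decide
    exact key _ _ _ this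
  obtain ⟨s', hs'⟩ := (toZMod_eq_zero_iff_dvd' s).mp hsu.1
  obtain ⟨u', hu'⟩ := (toZMod_eq_zero_iff_dvd' u).mp hsu.2
  rw [hcast] at hs' hu'
  refine ⟨s', t', u', hs', ht', hu', ?_⟩
  have : 3 * (-3*s'^2 + 5*t'^2 + 15*u'^2) = 3 * 0 := by
    rw [mul_zero]
    linear_combination h2 - (-s - 3*s')*hs' - (5*u + 15*u')*hu'
  exact mul_left_cancel₀ h3ne this

instance fact5 : Fact (Nat.Prime 5) := ⟨by norm_num⟩

theorem step5 (s t u : ℤ_[5]) (h : -3*s^2 + 5*t^2 + 15*u^2 = 0) :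
    ∃ s' t' u' : ℤ_[5], s = 5*s' ∧ t = 5*t' ∧ u = 5*u' ∧
      -3*s'^2 + 5*t'^2 + 15*u'^2 = 0 := by
  have h5ne : (5 : ℤ_[5]) ≠ 0 := by
    have : ((5:ℕ) : ℤ_[5]) ≠ 0 := Nat.cast_ne_zero.mpr (by norm_num)
    exact_mod_cast this
  have hcast : ((5:ℕ) : ℤ_[5]) = (5 : ℤ_[5]) := by norm_num
  have hs : PadicInt.toZMod s = 0 := by
    have := congrArg PadicInt.toZMod h
    simp only [map_add, map_mul, map_neg, map_pow, map_ofNat, map_zero] at this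
    have h2 : ∀ x y z : ZMod 5, -3*x^2 + 5*y^2 + 15*z^2 = 2*x^2 := by decide
    rw [h2] at this
    have : ∀ y : ZMod 5, 2*y^2 = 0 → y = 0 := by decide
    exact this _ (by assumption)
  obtain ⟨s', hs'⟩ := (toZMod_eq_zero_iff_dvd' s).mp hs
  rw [hcast] at hs'
  have h2 : -15*s'^2 + t^2 + 3*u^2 = 0 := by
    have : 5 * (-15*s'^2 + t^2 + 3*u^2) = 5 * 0 := by
      rw [mul_zero]; linear_combination h - (-3*s - 15*s')*hs'
    exact mul_left_cancel₀ h5ne this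
  have htu : PadicInt.toZMod t = 0 ∧ PadicInt.toZMod u = 0 := by
    have := congrArg PadicInt.toZMod h2
    simp only [map_add, map_mul, map_neg, map_pow, map_ofNat, map_zero] at this
    have key : ∀ x y z : ZMod 5, -15*x^2 + y^2 + 3*z^2 = 0 → y = 0 ∧ z = 0 := by decide
    exact key _ _ _ this
  obtain ⟨t', ht'⟩ := (toZMod_eq_zero_iff_dvd' t).mp htu.1
  obtain ⟨u', hu'⟩ := (toZMod_eq_zero_iff_dvd' u).mp htu.2
  rw [hcast] at ht' hu'
  refine ⟨s', t', u', hs', ht', hu', ?_⟩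
  have : 5 * (-3*s'^2 + 5*t'^2 + 15*u'^2) = 5 * 0 := by
    rw [mul_zero]
    linear_combination h2 - (t + 5*t')*ht' - (3*u + 15*u')*hu'
  exact mul_left_cancel₀ h5ne this


theorem pzero {p : ℕ} [hp : Fact p.Prime] (x : ℤ_[p]) (hx : ∀ n : ℕ, (p:ℤ_[p])^n ∣ x) :
    x = 0 := by
  by_contra h0
  have hpos : 0 < ‖x‖ := norm_pos_iff.mpr h0
  have hlt : ((p:ℝ))⁻¹ < 1 := by
    rw [inv_lt_one_iff₀]
    right; exact_mod_cast hp.1.one_lt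
  obtain ⟨n, hn⟩ := exists_pow_lt_of_lt_one hpos hlt
  obtain ⟨y, hy⟩ := hx n
  have : ‖x‖ ≤ ((p:ℝ))⁻¹^n := by
    rw [hy, norm_mul, norm_pow, PadicInt.norm_p]
    calc ((p:ℝ))⁻¹^n * ‖y‖ ≤ ((p:ℝ))⁻¹^n * 1 := by
          exact mul_le_mul_of_nonneg_left (PadicInt.norm_le_one y) (by positivity)
      _ = ((p:ℝ))⁻¹^n := mul_one _
  linarith

theorem aniso_int {p : ℕ} [Fact p.Prime]
    (hstep : ∀ s t u : ℤ_[p], -3*s^2 + 5*t^2 + 15*u^2 = 0 →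
      ∃ s' t' u' : ℤ_[p], s = p*s' ∧ t = p*t' ∧ u = p*u' ∧ -3*s'^2 + 5*t'^2 + 15*u'^2 = 0)
    (s t u : ℤ_[p]) (h : -3*s^2 + 5*t^2 + 15*u^2 = 0) : s = 0 ∧ t = 0 ∧ u = 0 := by
  have key : ∀ n : ℕ, ∀ s t u : ℤ_[p], -3*s^2 + 5*t^2 + 15*u^2 = 0 →
      (p:ℤ_[p])^n ∣ s ∧ (p:ℤ_[p])^n ∣ t ∧ (p:ℤ_[p])^n ∣ u := by
    intro n
    induction n with
    | zero => intro s t u _; simp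
    | succ n ih =>
      intro s t u h
      obtain ⟨s', t', u', hs, ht, hu, h'⟩ := hstep s t u h
      obtain ⟨ds, dt, du⟩ := ih s' t' u' h'
      rw [pow_succ']
      exact ⟨hs ▸ mul_dvd_mul_left _ ds, ht ▸ mul_dvd_mul_left _ dt, hu ▸ mul_dvd_mul_left _ du⟩
  exact ⟨pzero s (fun n => (key n s t u h).1), pzero t (fun n => (key n s t u h).2.1),
    pzero u (fun n => (key n s t u h).2.2)⟩

theorem scale_bound {p : ℕ} [hp : Fact p.Prime] (x : ℚ_[p]) :
    ∃ n : ℕ, ‖(p:ℚ_[p])^n * x‖ ≤ 1 := by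
  have hp1 : (1:ℝ) < p := by exact_mod_cast hp.1.one_lt
  obtain ⟨n, hn⟩ := pow_unbounded_of_one_lt ‖x‖ hp1
  refine ⟨n, ?_⟩
  rw [norm_mul, norm_pow, Padic.norm_p]
  have hppos : (0:ℝ) < p := by linarith
  rw [inv_pow]
  rw [inv_mul_le_iff₀ (by positivity), mul_one]
  exact le_of_lt hn

theorem mono_bound {p : ℕ} [hp : Fact p.Prime] (m : ℕ) (x : ℚ_[p]) (hx : ‖x‖ ≤ 1) :
    ‖(p:ℚ_[p])^m * x‖ ≤ 1 := by
  rw [norm_mul, norm_pow, Padic.norm_p]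
  have hp1 : (1:ℝ) ≤ p := by exact_mod_cast hp.1.one_lt.le
  have h1 : ((p:ℝ))⁻¹^m ≤ 1 := pow_le_one₀ (by positivity) (inv_le_one_of_one_le₀ hp1)
  calc ((p:ℝ))⁻¹^m * ‖x‖ ≤ 1 * 1 := mul_le_mul h1 hx (norm_nonneg x) (by norm_num)
    _ = 1 := by norm_num

theorem aniso_rat {p : ℕ} [hp : Fact p.Prime]
    (hstep : ∀ s t u : ℤ_[p], -3*s^2 + 5*t^2 + 15*u^2 = 0 →
      ∃ s' t' u' : ℤ_[p], s = p*s' ∧ t = p*t' ∧ u = p*u' ∧ -3*s'^2 + 5*t'^2 + 15*u'^2 = 0)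
    (s t u : ℚ_[p]) (h : -3*s^2 + 5*t^2 + 15*u^2 = 0) : s = 0 ∧ t = 0 ∧ u = 0 := by
  obtain ⟨n1, h1⟩ := scale_bound s
  obtain ⟨n2, h2⟩ := scale_bound t
  obtain ⟨n3, h3⟩ := scale_bound u
  set n := max n1 (max n2 n3) with hn
  have hb : ∀ (m : ℕ) (x : ℚ_[p]), ‖(p:ℚ_[p])^m * x‖ ≤ 1 → m ≤ n → ‖(p:ℚ_[p])^n * x‖ ≤ 1 := by
    intro m x hx hmn
    have : (p:ℚ_[p])^n * x = (p:ℚ_[p])^(n-m) * ((p:ℚ_[p])^m * x) := by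
      rw [← mul_assoc, ← pow_add, Nat.sub_add_cancel hmn]
    rw [this]
    exact mono_bound _ _ hx
  have hS : ‖(p:ℚ_[p])^n * s‖ ≤ 1 := hb n1 s h1 (le_max_left _ _)
  have hT : ‖(p:ℚ_[p])^n * t‖ ≤ 1 := hb n2 t h2 (le_max_of_le_right (le_max_left _ _))
  have hU : ‖(p:ℚ_[p])^n * u‖ ≤ 1 := hb n3 u h3 (le_max_of_le_right (le_max_right _ _))
  set S : ℤ_[p] := ⟨_, hS⟩ with hSdef
  set T : ℤ_[p] := ⟨_, hT⟩ with hTdef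
  set U : ℤ_[p] := ⟨_, hU⟩ with hUdef
  have heq : -3*S^2 + 5*T^2 + 15*U^2 = 0 := by
    have hcoe : ((-3*S^2 + 5*T^2 + 15*U^2 : ℤ_[p]) : ℚ_[p]) = 0 := by
      push_cast
      show -3*((p:ℚ_[p])^n * s)^2 + 5*((p:ℚ_[p])^n * t)^2 + 15*((p:ℚ_[p])^n * u)^2 = 0
      linear_combination ((p:ℚ_[p])^n)^2 * h
    exact PadicInt.coe_eq_zero.mp hcoe
  obtain ⟨hS0, hT0, hU0⟩ := aniso_int hstep S T U heq
  have hpn : ((p:ℚ_[p]))^n ≠ 0 := pow_ne_zero _ (Nat.cast_ne_zero.mpr hp.1.ne_zero)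
  refine ⟨?_, ?_, ?_⟩
  · have : (p:ℚ_[p])^n * s = 0 := by
      have := congrArg (Subtype.val) hS0; exact this
    exact (mul_eq_zero.mp this).resolve_left hpn
  · have : (p:ℚ_[p])^n * t = 0 := by
      have := congrArg (Subtype.val) hT0; exact this
    exact (mul_eq_zero.mp this).resolve_left hpn
  · have : (p:ℚ_[p])^n * u = 0 := by
      have := congrArg (Subtype.val) hU0; exact this
    exact (mul_eq_zero.mp this).resolve_left hpn


theorem nonsplit {p : ℕ} [Fact p.Prime]
    (haniso : ∀ s t u : ℚ_[p], -3*s^2 + 5*t^2 + 15*u^2 = 0 → s = 0 ∧ t = 0 ∧ u = 0) :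
    ¬ Nonempty (ℍ[ℚ_[p], -3, 5] ≃ₐ[ℚ_[p]] Matrix (Fin 2) (Fin 2) ℚ_[p]) := by
  rintro ⟨φ⟩
  set E : Matrix (Fin 2) (Fin 2) ℚ_[p] := Matrix.single 0 1 1 with hE
  have hEsq : E * E = 0 := by rw [hE]; simp
  have hEne : E ≠ 0 := by
    intro h0
    have := congrFun (congrFun h0 0) 1
    simp [hE, Matrix.single] at this
  set q : ℍ[ℚ_[p], -3, 5] := φ.symm E with hq
  have hqsq : q * q = 0 := by
    rw [hq, ← map_mul, hEsq, map_zero]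
  have hqne : q ≠ 0 := by
    intro h0
    exact hEne (by rw [← φ.apply_symm_apply E, ← hq, h0, map_zero])
  have hre := congrArg QuaternionAlgebra.re hqsq
  have himI := congrArg QuaternionAlgebra.imI hqsq
  have himJ := congrArg QuaternionAlgebra.imJ hqsq
  have himK := congrArg QuaternionAlgebra.imK hqsq
  rw [QuaternionAlgebra.re_mul] at hre
  rw [QuaternionAlgebra.imI_mul] at himI
  rw [QuaternionAlgebra.imJ_mul] at himJ
  rw [QuaternionAlgebra.imK_mul] at himK
  simp only [QuaternionAlgebra.re_zero, QuaternionAlgebra.imI_zero, QuaternionAlgebra.imJ_zero,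
    QuaternionAlgebra.imK_zero] at hre himI himJ himK
  set r := q.re; set s := q.imI; set t := q.imJ; set u := q.imK
  by_cases hr : r = 0
  · have h0 : -3*s^2 + 5*t^2 + 15*u^2 = 0 := by
      rw [hr] at hre; linear_combination hre
    obtain ⟨hs, ht, hu⟩ := haniso s t u h0
    exact hqne (QuaternionAlgebra.ext hr hs ht hu)
  · have hs : s = 0 := by
      have : 2 * r * s = 0 := by linear_combination himI
      rcases mul_eq_zero.mp this with h | h
      · rcases mul_eq_zero.mp h with h | h
        · norm_num at h
        · exact absurd h hr
      · exact h
    have ht : t = 0 := by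
      have : 2 * r * t = 0 := by linear_combination himJ
      rcases mul_eq_zero.mp this with h | h
      · rcases mul_eq_zero.mp h with h | h
        · norm_num at h
        · exact absurd h hr
      · exact h
    have hu : u = 0 := by
      have : 2 * r * u = 0 := by linear_combination himK
      rcases mul_eq_zero.mp this with h | h
      · rcases mul_eq_zero.mp h with h | h
        · norm_num at h
        · exact absurd h hr
      · exact h
    rw [hs, ht, hu] at hre
    have : r = 0 := by
      have h2 : r * r = 0 := by linear_combination hre
      exact (mul_self_eq_zero).mp h2
    exact hr this

/-- For every prime `p`, the quaternion algebra `ℍ[ℚ_[p], -3, 5]`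
(with basis `1, x, y, xy`, `x² = -3`, `y² = 5`, `yx = -xy`) is isomorphic as a
`ℚ_[p]`-algebra to the algebra of 2×2 matrices over `ℚ_[p]` iff `p ≠ 3` and `p ≠ 5`. -/
theorem quaternion_disc15_split_iff (p : ℕ) [Fact p.Prime] :
    Nonempty (ℍ[ℚ_[p], -3, 5] ≃ₐ[ℚ_[p]] Matrix (Fin 2) (Fin 2) ℚ_[p]) ↔ p ≠ 3 ∧ p ≠ 5 := by
  constructor
  · intro hiso
    constructor
    · rintro rfl
      refine nonsplit (fun s t u h => aniso_rat ?_ s t u h) hiso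
      intro s t u h
      obtain ⟨s', t', u', hs, ht, hu, h'⟩ := step3 s t u h
      refine ⟨s', t', u', ?_, ?_, ?_, h'⟩ <;> push_cast <;> assumption
    · rintro rfl
      refine nonsplit (fun s t u h => aniso_rat ?_ s t u h) hiso
      intro s t u h
      obtain ⟨s', t', u', hs, ht, hu, h'⟩ := step5 s t u h
      refine ⟨s', t', u', ?_, ?_, ?_, h'⟩ <;> push_cast <;> assumption
  · rintro ⟨h3, h5⟩
    obtain ⟨x, y, hxy⟩ := exists_rep p h3 h5
    exact split_of_rep hxy
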